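/- Fix an integer N ≥ 2 and a probability vector p on Fin r with r > 2, p i > 0 for all i, and p 0 ≥ p i for all i (so p 0 is the largest subset proportion). For an integer c ≥ 2, let R(p,c) = 1 - (N/(2·(N-1))) · VI₂(p, u_c) denote the Rand index between the ground truth and a statistically independent balanced candidate partition with c clusters, where u_c is the uniform probability vector on Fin c. If p 0 ≤ 1/2, then R(p,·) is strictly increasing in c, i.e., for all integers 2 ≤ c < c', R(p,c) < R(p,c'). -/

import Mathlib

/-- The quadratic entropy of a finitely supported probability vector. -/
noncomputable def quadEntropy {α : Type*} [Fintype α] (x : α → ℝ) : ℝ :=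
  2 * (1 - ∑ i, (x i) ^ 2)

/-- The quadratic variation of information between (the distributions of)
two statistically independent partitions. -/
noncomputable def VI2 {α β : Type*} [Fintype α] [Fintype β] (p : α → ℝ) (q : β → ℝ) : ℝ :=
  2 * quadEntropy (fun ij : α × β => p ij.1 * q ij.2) - quadEntropy p - quadEntropy q

/-- The uniform (balanced) probability vector on `Fin c`. -/
noncomputable def unif (c : ℕ) : Fin c → ℝ := fun _ => 1 / (c : ℝ)

/-- The (expected) Rand index between a ground-truth distribution `p` and a
statistically independent balanced candidate partition with `c` clusters. -/
noncomputable def randGT (N : ℕ) {r : ℕ} (p : Fin r → ℝ) (c : ℕ) : ℝ :=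
  1 - ((N : ℝ) / (2 * ((N : ℝ) - 1))) * VI2 p (unif c)

lemma randGT_eq (N r c : ℕ) (p : Fin r → ℝ) (hc : 0 < c) :
    randGT N p c = 1 - ((N : ℝ) / (2 * ((N : ℝ) - 1))) *
      (2 * (∑ i, (p i)^2) + (2 - 4 * (∑ i, (p i)^2)) / c) := by
  have hc' : (c : ℝ) ≠ 0 := Nat.cast_ne_zero.2 hc.ne'
  have h1 : ∑ ij : Fin r × Fin c, (p ij.1 * unif c ij.2)^2 = (∑ i, (p i)^2)/c := by
    rw [Fintype.sum_prod_type]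
    simp only [unif, mul_pow, Finset.sum_const, Finset.card_univ, Fintype.card_fin, nsmul_eq_mul]
    rw [← Finset.mul_sum]
    have : ∑ i : Fin r, p i ^ 2 * (1 / (c:ℝ)) ^ 2 = (∑ i : Fin r, p i ^ 2) * (1/(c:ℝ))^2 := by
      rw [← Finset.sum_mul]
    rw [this]
    field_simp
  have h2 : ∑ j : Fin c, (unif c j)^2 = 1/c := by
    simp only [unif, Finset.sum_const, Finset.card_univ, Fintype.card_fin, nsmul_eq_mul]
    field_simp
  unfold randGT VI2 quadEntropy
  rw [h1, h2]
  field_simp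
  ring

theorem randGT_inc_of_no_dominant_cluster {N r : ℕ} [NeZero r] (hN : 2 ≤ N) (hr : 2 < r)
    (p : Fin r → ℝ) (hp : ∀ i, 0 < p i) (hp1 : ∑ i, p i = 1)
    (hmax : ∀ i, p i ≤ p 0) (h0 : p 0 ≤ 1 / 2) :
    ∀ c c' : ℕ, 2 ≤ c → c < c' → randGT N p c < randGT N p c' := by
  intro c c' hc hcc'
  have hc0 : 0 < c := by omega
  have hc'0 : 0 < c' := by omega
  rw [randGT_eq N r c p hc0, randGT_eq N r c' p hc'0]
  set S := ∑ i, (p i)^2 with hS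
  have hShalf : S < 1/2 := by
    by_cases hall : ∀ i, p i = p 0
    · have h1 : (r:ℝ) * p 0 = 1 := by
        rw [← hp1]
        simp [hall, Finset.sum_const]
      have h2 : S = (r:ℝ) * (p 0)^2 := by
        rw [hS]
        simp [hall, Finset.sum_const]
      have hr3 : (3:ℝ) ≤ (r:ℝ) := by exact_mod_cast hr
      nlinarith [hp 0]
    · push_neg at hall
      obtain ⟨j, hj⟩ := hall
      have hjlt : p j < p 0 := lt_of_le_of_ne (hmax j) hj
      have hlt : S < ∑ i, p 0 * p i := by
        apply Finset.sum_lt_sum (fun i _ => by nlinarith [hp i, hmax i])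
        exact ⟨j, Finset.mem_univ j, by nlinarith [hp j]⟩
      rw [← Finset.mul_sum, hp1, mul_one] at hlt
      linarith
  have hN2 : (2:ℝ) ≤ (N:ℝ) := by exact_mod_cast hN
  have hK : 0 < (N:ℝ)/(2*((N:ℝ)-1)) := by
    apply div_pos <;> linarith
  have hcc : (c:ℝ) < (c':ℝ) := by exact_mod_cast hcc'
  have hcr : (0:ℝ) < (c:ℝ) := by exact_mod_cast hc0
  have hfrac : (2 - 4*S)/(c':ℝ) < (2 - 4*S)/(c:ℝ) := by
    apply div_lt_div_of_pos_left (by linarith) hcr hcc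
  have := mul_lt_mul_of_pos_left (add_lt_add_left hfrac (2*S)) hK
  linarith
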